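/- Let Φ be a biholomorphic function on the unit disk with Φ(0) = 1, Re Φ > 0, Φ'(0) > 0, Φ''(0) ∈ ℝ, and |Φ''(0) + 2Φ'(0)^2| ≥ 2Φ'(0). If g(z) = z + b_2 z^2 + b_3 z^3 + ... is analytic on U and z g'(z)/g(z) is subordinate to Φ, then |b_2^2 - b_3^2| ≤ (Φ'(0)^2/4)(Φ''(0)/(2Φ'(0)) + Φ'(0))^2 + Φ'(0)^2. -/

import Mathlib

open Complex Metric Set Topology Filter
open scoped ENNReal NNReal

private lemma psg_aux (g : ℂ → ℂ) (b : ℕ → ℂ)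
    (hb : ∀ z ∈ Metric.ball (0:ℂ) 1, HasSum (fun n => b n * z ^ n) (g z)) :
    HasFPowerSeriesOnBall g (fun n => ContinuousMultilinearMap.mkPiRing ℂ (Fin n) (b n)) 0 1 := by
  set P : FormalMultilinearSeries ℂ ℂ ℂ := fun n => ContinuousMultilinearMap.mkPiRing ℂ (Fin n) (b n)
  have hnorm : ∀ n, ‖P n‖ = ‖b n‖ := fun n => ContinuousMultilinearMap.norm_mkPiRing _
  have happ : ∀ (n : ℕ) (y : ℂ), P n (fun _ => y) = b n * y ^ n := by
    intro n y
    simp [P, ContinuousMultilinearMap.mkPiRing_apply, smul_eq_mul, mul_comm]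
  have hrad : 1 ≤ P.radius := by
    refine ENNReal.le_of_forall_nnreal_lt (fun r hr => ?_)
    have hr1 : (r : ℝ) < 1 := by exact_mod_cast hr
    have hmem : ((r:ℝ) : ℂ) ∈ Metric.ball (0:ℂ) 1 := by
      rw [Metric.mem_ball, dist_zero_right, Complex.norm_real, Real.norm_eq_abs,
        NNReal.abs_eq r]
      exact hr1
    have hs : Summable (fun n => b n * ((r:ℝ):ℂ) ^ n) := (hb _ hmem).summable
    have hs2 : Summable (fun n => ‖b n * ((r:ℝ):ℂ) ^ n‖) := summable_norm_iff.mpr hs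
    refine P.le_radius_of_summable ?_
    convert hs2 using 2 with n
    rw [hnorm, norm_mul, norm_pow, Complex.norm_real, Real.norm_eq_abs,
      NNReal.abs_eq r]
  refine ⟨hrad, by norm_num, ?_⟩
  intro y hy
  have hy' : y ∈ Metric.ball (0:ℂ) 1 := by
    rw [EMetric.mem_ball, edist_zero_right] at hy
    have : ‖y‖₊ < 1 := by rw [enorm_eq_nnnorm] at hy; exact_mod_cast hy
    rw [Metric.mem_ball, dist_zero_right]
    exact_mod_cast this
  simpa [happ] using hb y hy'

private lemma moebius_key (a w : ℂ) :
    Complex.normSq (1 - (starRingEnd ℂ) a * w) - Complex.normSq (w - a)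
      = (1 - Complex.normSq a) * (1 - Complex.normSq w) := by
  simp only [Complex.normSq_apply, Complex.sub_re, Complex.sub_im, Complex.mul_re,
    Complex.mul_im, Complex.one_re, Complex.one_im, Complex.conj_re, Complex.conj_im]
  ring

private lemma schwarz_pick (h : ℂ → ℂ) (hd : DifferentiableOn ℂ h (ball (0:ℂ) 1))
    (hb : ∀ z ∈ ball (0:ℂ) 1, ‖(h z)‖ ≤ 1) :
    ‖(deriv h 0)‖ ≤ 1 - ‖(h 0)‖ ^ 2 := by
  have h0 : (0:ℂ) ∈ ball (0:ℂ) 1 := by simp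
  by_cases hcase : ∃ z₀ ∈ ball (0:ℂ) 1, ‖(h z₀)‖ = 1
  · obtain ⟨z₀, hz₀, hz₀1⟩ := hcase
    have hmax : IsMaxOn (norm ∘ h) (ball (0:ℂ) 1) z₀ := by
      intro z hz
      simp only [Function.comp_apply, Set.mem_setOf_eq, hz₀1]
      exact hb z hz
    have heq := Complex.eqOn_of_isPreconnected_of_isMaxOn_norm
      (convex_ball (0:ℂ) 1).isPreconnected isOpen_ball hd hz₀ hmax
    have h01 : ‖(h 0)‖ = 1 := by
      rw [heq h0]; simpa using hz₀1
    have hder : deriv h 0 = 0 := by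
      have : h =ᶠ[𝓝 (0:ℂ)] (fun _ => h z₀) :=
        Filter.eventuallyEq_of_mem (isOpen_ball.mem_nhds h0) heq
      rw [this.deriv_eq, deriv_const]
    rw [hder, h01]
    simp
  · push_neg at hcase
    set a := h 0 with ha
    have ha1 : ‖a‖ < 1 := lt_of_le_of_ne (hb 0 h0) (hcase 0 h0)
    set F : ℂ → ℂ := fun z => (h z - a) / (1 - (starRingEnd ℂ) a * h z) with hF
    have hDne : ∀ z ∈ ball (0:ℂ) 1, (1 - (starRingEnd ℂ) a * h z) ≠ 0 := by
      intro z hz hc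
      have h1 : (starRingEnd ℂ) a * h z = 1 := by linear_combination -hc
      have := congrArg (‖·‖) h1
      rw [norm_mul, Complex.norm_conj, norm_one] at this
      have hz1 : ‖(h z)‖ < 1 := lt_of_le_of_ne (hb z hz) (hcase z hz)
      nlinarith [norm_nonneg a, norm_nonneg (h z)]
    have hFd : DifferentiableOn ℂ F (ball (0:ℂ) 1) := by
      apply DifferentiableOn.div
      · exact hd.sub (differentiableOn_const a)
      · exact (differentiableOn_const _).sub ((differentiableOn_const _).mul hd)
      · exact hDne
    have hF0 : F 0 = 0 := by simp [hF, ← ha]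
    have habs : ∀ z ∈ ball (0:ℂ) 1, ‖(F z)‖ < 1 := by
      intro z hz
      have hkey := moebius_key a (h z)
      have h1 : Complex.normSq (h z) < 1 := by
        have hz1 : ‖(h z)‖ < 1 := lt_of_le_of_ne (hb z hz) (hcase z hz)
        rw [← Complex.sq_norm]; nlinarith [norm_nonneg (h z)]
      have h2 : Complex.normSq a < 1 := by
        rw [← Complex.sq_norm]; nlinarith [norm_nonneg a]
      have hpos : 0 < Complex.normSq (1 - (starRingEnd ℂ) a * h z) -
          Complex.normSq (h z - a) := by
        rw [hkey]; nlinarith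
      have hden : 0 < ‖(1 - (starRingEnd ℂ) a * h z)‖ :=
        norm_pos_iff.mpr (hDne z hz)
      rw [hF, norm_div, div_lt_one hden]
      have := hpos
      rw [← Complex.sq_norm, ← Complex.sq_norm] at this
      nlinarith [norm_nonneg (h z - a), hden]
    have hmaps : MapsTo F (ball (0:ℂ) 1) (ball (0:ℂ) 1) := by
      intro z hz
      rw [mem_ball, dist_zero_right]
      exact habs z hz
    have hschwarz : ‖(deriv F 0)‖ ≤ 1 :=
      Complex.norm_deriv_le_one_of_mapsTo_ball hFd
        (by rw [hF0]; exact hmaps.mono_right ball_subset_closedBall) one_pos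
    have hhd : HasDerivAt h (deriv h 0) 0 :=
      (hd.differentiableAt (isOpen_ball.mem_nhds h0)).hasDerivAt
    have hN : HasDerivAt (fun z => h z - a) (deriv h 0) 0 := hhd.sub_const a
    have hD : HasDerivAt (fun z => 1 - (starRingEnd ℂ) a * h z)
        (-((starRingEnd ℂ) a * deriv h 0)) 0 := by
      simpa using ((hhd.const_mul ((starRingEnd ℂ) a)).const_sub 1)
    have hD0 : (1 - (starRingEnd ℂ) a * h 0) ≠ 0 := hDne 0 h0
    have hFder : HasDerivAt F
        ((deriv h 0 * (1 - (starRingEnd ℂ) a * h 0) -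
          (h 0 - a) * -((starRingEnd ℂ) a * deriv h 0)) /
          (1 - (starRingEnd ℂ) a * h 0) ^ 2) 0 := hN.div hD hD0
    have hsub : h 0 - a = 0 := by rw [← ha]; ring
    have hca : (starRingEnd ℂ) a * a = ((Complex.normSq a : ℝ) : ℂ) := by
      rw [mul_comm, Complex.mul_conj]
    have hpos : (0:ℝ) < 1 - Complex.normSq a := by
      rw [← Complex.sq_norm]; nlinarith [norm_nonneg a]
    have hcne : ((1:ℂ) - ((Complex.normSq a : ℝ) : ℂ)) ≠ 0 := by
      rw [show ((1:ℂ) - ((Complex.normSq a : ℝ) : ℂ)) = (((1 - Complex.normSq a : ℝ)):ℂ) by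
        push_cast; ring]
      exact Complex.ofReal_ne_zero.mpr hpos.ne'
    have hderF : deriv F 0 = deriv h 0 / (1 - (Complex.normSq a : ℝ)) := by
      rw [hFder.deriv, hsub, ← ha, hca]
      field_simp
      ring
    rw [hderF] at hschwarz
    rw [norm_div] at hschwarz
    have habs2 : ‖((1:ℂ) - (Complex.normSq a : ℝ))‖ = 1 - Complex.normSq a := by
      rw [show ((1:ℂ) - ((Complex.normSq a : ℝ) : ℂ)) = (((1 - Complex.normSq a : ℝ)):ℂ) by
        push_cast; ring, Complex.norm_of_nonneg hpos.le]
    rw [habs2, div_le_one hpos] at hschwarz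
    calc ‖(deriv h 0)‖ ≤ 1 - Complex.normSq a := hschwarz
    _ = 1 - ‖(h 0)‖ ^ 2 := by rw [← Complex.sq_norm, ← ha]

set_option maxHeartbeats 1000000 in
theorem stmt_8 (Φ : ℂ → ℂ)
    (hΦa : AnalyticOn ℂ Φ (Metric.ball (0:ℂ) 1)) (hΦi : Set.InjOn Φ (Metric.ball (0:ℂ) 1)) (hΦ0 : Φ 0 = 1) (hΦre : ∀ z ∈ Metric.ball (0:ℂ) 1, 0 < (Φ z).re) (hd1re : 0 < (deriv Φ 0).re) (hd1im : (deriv Φ 0).im = 0)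
    (hd2im : (iteratedDeriv 2 Φ 0).im = 0)
    (hcond : 2 * (deriv Φ 0).re ≤ ‖(iteratedDeriv 2 Φ 0 + 2 * (deriv Φ 0) ^ 2)‖)
    (g : ℂ → ℂ) (b : ℕ → ℂ)
    (hb0 : b 0 = 0) (hb1 : b 1 = 1)
    (hb : ∀ z ∈ Metric.ball (0:ℂ) 1, HasSum (fun n => b n * z ^ n) (g z))
    (hsub : (∃ ω : ℂ → ℂ, AnalyticOn ℂ ω (Metric.ball (0:ℂ) 1) ∧ ω 0 = 0 ∧ (∀ z ∈ Metric.ball (0:ℂ) 1, ω z ∈ Metric.ball (0:ℂ) 1) ∧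
          (∀ z ∈ Metric.ball (0:ℂ) 1, z ≠ 0 → z * deriv g z / g z = Φ (ω z)))) :
    ‖(b 2 ^ 2 - b 3 ^ 2)‖ ≤
      (deriv Φ 0).re ^ 2 / 4 * ((iteratedDeriv 2 Φ 0).re / (2 * (deriv Φ 0).re) + (deriv Φ 0).re) ^ 2 + (deriv Φ 0).re ^ 2 := by
  obtain ⟨ω, hωa, hω0, hωmaps, heqd⟩ := hsub
  have h0mem : (0:ℂ) ∈ Metric.ball (0:ℂ) 1 := by simp
  have hball : Metric.ball (0:ℂ) 1 ∈ 𝓝 (0:ℂ) := isOpen_ball.mem_nhds h0mem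
  have hΦa' : AnalyticOnNhd ℂ Φ (ball 0 1) := (isOpen_ball.analyticOn_iff_analyticOnNhd).mp hΦa
  have hωa' : AnalyticOnNhd ℂ ω (ball 0 1) := (isOpen_ball.analyticOn_iff_analyticOnNhd).mp hωa
  -- power series of g and derivatives
  have hgps := psg_aux g b hb
  have hcoeff : ∀ n : ℕ, iteratedDeriv n g 0 = (n.factorial : ℂ) * b n := by
    intro n
    have := hgps.factorial_smul (1 : ℂ) n
    rw [iteratedDeriv_eq_iteratedFDeriv, ← this]
    simp [ContinuousMultilinearMap.mkPiRing_apply, smul_eq_mul]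
  have hganal : AnalyticOnNhd ℂ g (ball 0 1) := by
    intro z hz
    refine hgps.analyticAt_of_mem ?_
    rw [EMetric.mem_ball, edist_zero_right, enorm_eq_nnnorm]
    rw [mem_ball, dist_zero_right] at hz
    exact_mod_cast (show ((‖z‖₊ : ℝ≥0∞)) < ((1:ℝ≥0) : ℝ≥0∞) by exact_mod_cast hz)
  set d1 := deriv g with hd1def
  set d2 := deriv d1 with hd2def
  set d3 := deriv d2 with hd3def
  have hg0 : g 0 = 0 := by
    have := hcoeff 0; rw [iteratedDeriv_zero] at this; simpa [hb0] using this
  have hg1 : d1 0 = 1 := by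
    have := hcoeff 1; rw [iteratedDeriv_one] at this; simpa [hb1] using this
  have hid2 : iteratedDeriv 2 g = d2 := by
    rw [show (2:ℕ) = 1 + 1 from rfl, iteratedDeriv_succ, iteratedDeriv_one]
  have hid3 : iteratedDeriv 3 g = d3 := by
    rw [show (3:ℕ) = 2 + 1 from rfl, iteratedDeriv_succ, hid2]
  have hg2 : d2 0 = 2 * b 2 := by
    have := hcoeff 2; rw [hid2] at this; norm_num [Nat.factorial] at this; exact this
  have hg3 : d3 0 = 6 * b 3 := by
    have := hcoeff 3; rw [hid3] at this; norm_num [Nat.factorial] at this; exact this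
  have hd1a : AnalyticOnNhd ℂ d1 (ball 0 1) := hganal.deriv
  have hd2a : AnalyticOnNhd ℂ d2 (ball 0 1) := hd1a.deriv
  have hd3a : AnalyticOnNhd ℂ d3 (ball 0 1) := hd2a.deriv
  -- h = dslope ω 0
  set h := dslope ω 0 with hh
  have hhanal : AnalyticOnNhd ℂ h (ball 0 1) := by
    intro z hz
    rcases eq_or_ne z 0 with rfl | hz0
    · obtain ⟨p, hp⟩ := hωa' 0 h0mem
      exact hp.has_fpower_series_dslope_fslope.analyticAt
    · have hev : (fun y => (ω y - ω 0) / (y - 0)) =ᶠ[𝓝 z] h := by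
        filter_upwards [isOpen_ne.mem_nhds hz0] with y hy
        rw [hh, dslope_of_ne _ hy, slope_def_field]
      refine AnalyticAt.congr ?_ hev
      exact ((hωa' z hz).sub analyticAt_const).div
        (analyticAt_id.sub analyticAt_const) (by simpa using hz0)
  have hωd : DifferentiableOn ℂ ω (ball 0 1) := hωa'.differentiableOn
  have hωmaps' : MapsTo ω (ball 0 1) (ball (ω 0) 1) := by
    rw [hω0]; exact fun z hz => hωmaps z hz
  have hhabs : ∀ z ∈ ball (0:ℂ) 1, ‖(h z)‖ ≤ 1 := by
    intro z hz
    have := Complex.norm_dslope_le_div_of_mapsTo_ball hωd (hωmaps'.mono_right ball_subset_closedBall) hz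
    simpa using this
  have hc1le : ‖(h 0)‖ ≤ 1 := hhabs 0 h0mem
  have hc2le : ‖(deriv h 0)‖ ≤ 1 - ‖(h 0)‖ ^ 2 :=
    schwarz_pick h hhanal.differentiableOn hhabs
  set c1 := h 0 with hc1def
  set c2 := deriv h 0 with hc2def
  have hωz : ∀ z : ℂ, ω z = z * h z := by
    intro z
    have := sub_smul_dslope ω 0 z
    rw [hω0, sub_zero, sub_zero, smul_eq_mul] at this
    exact this.symm
  have hωfun : ω = fun z => z * h z := funext hωz
  have hωderiv0 : deriv ω 0 = c1 := by rw [hc1def, hh, dslope_same]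
  have hωd_ev : deriv ω =ᶠ[𝓝 0] fun z => h z + z * deriv h z := by
    filter_upwards [hball] with z hz
    have hhz : HasDerivAt h (deriv h z) z := (hhanal z hz).differentiableAt.hasDerivAt
    have hw : HasDerivAt ω (1 * h z + z * deriv h z) z := by
      rw [hωfun]; exact (hasDerivAt_id z).mul hhz
    rw [hw.deriv]; ring
  have hddω : HasDerivAt (deriv ω) (2 * c2) 0 := by
    have hh0 : HasDerivAt h c2 0 := (hhanal 0 h0mem).differentiableAt.hasDerivAt
    have hdh0 : HasDerivAt (deriv h) (deriv (deriv h) 0) 0 :=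
      (hhanal.deriv 0 h0mem).differentiableAt.hasDerivAt
    have h1 : HasDerivAt (fun z => h z + z * deriv h z)
        (c2 + (1 * c2 + 0 * deriv (deriv h) 0)) 0 := hh0.add ((hasDerivAt_id 0).mul hdh0)
    have := h1.congr_of_eventuallyEq hωd_ev
    have e : (2:ℂ) * c2 = c2 + (1 * c2 + 0 * deriv (deriv h) 0) := by ring
    rw [e]; exact this
  -- G = Φ ∘ ω
  set G := fun z => Φ (ω z) with hGdef
  have hGanal : AnalyticOnNhd ℂ G (ball 0 1) :=
    fun z hz => (hΦa' (ω z) (hωmaps z hz)).comp (hωa' z hz)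
  have hG0 : G 0 = 1 := by simp [hGdef, hω0, hΦ0]
  have hG1ev : deriv G =ᶠ[𝓝 0] fun z => deriv Φ (ω z) * deriv ω z := by
    filter_upwards [hball] with z hz
    have h1 : HasDerivAt Φ (deriv Φ (ω z)) (ω z) :=
      (hΦa' (ω z) (hωmaps z hz)).differentiableAt.hasDerivAt
    have h2 : HasDerivAt ω (deriv ω z) z := (hωa' z hz).differentiableAt.hasDerivAt
    exact (h1.comp z h2).deriv
  have hdG0 : deriv G 0 = deriv Φ 0 * c1 := by
    rw [hG1ev.eq_of_nhds, hω0, hωderiv0]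
  have hiD2 : iteratedDeriv 2 Φ = deriv (deriv Φ) := by
    rw [show (2:ℕ) = 1 + 1 from rfl, iteratedDeriv_succ, iteratedDeriv_one]
  have hddG0 : deriv (deriv G) 0 = iteratedDeriv 2 Φ 0 * c1 ^ 2 + deriv Φ 0 * (2 * c2) := by
    rw [hG1ev.deriv.eq_of_nhds]
    have hu : HasDerivAt (fun z => deriv Φ (ω z)) (deriv (deriv Φ) (ω 0) * deriv ω 0) 0 := by
      have h1 : HasDerivAt (deriv Φ) (deriv (deriv Φ) (ω 0)) (ω 0) := by
        refine (hΦa'.deriv (ω 0) ?_).differentiableAt.hasDerivAt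
        rw [hω0]; exact h0mem
      exact h1.comp 0 (hωa' 0 h0mem).differentiableAt.hasDerivAt
    have := (hu.fun_mul hddω).deriv
    rw [this, hω0, hωderiv0, hiD2]
    ring
  -- functional equation
  have hgne : ∀ z ∈ ball (0:ℂ) 1, z ≠ 0 → g z ≠ 0 := by
    intro z hz hz0 hgz
    have h1 := heqd z hz hz0
    rw [hgz, div_zero] at h1
    have h2 := hΦre (ω z) (hωmaps z hz)
    rw [← h1] at h2
    simp at h2
  set A := fun z => z * d1 z with hAdef
  set B := fun z => G z * g z with hBdef
  have hABev : A =ᶠ[𝓝 0] B := by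
    filter_upwards [hball] with z hz
    rcases eq_or_ne z 0 with rfl | hz0
    · simp [hAdef, hBdef, hg0]
    · have h1 := heqd z hz hz0
      have h2 := (div_eq_iff (hgne z hz hz0)).mp h1
      simpa [hAdef, hBdef, hd1def, hGdef] using h2
  -- A ladder
  have hA1 : deriv A =ᶠ[𝓝 0] fun z => d1 z + z * d2 z := by
    filter_upwards [hball] with z hz
    have hd1z : HasDerivAt d1 (d2 z) z := (hd1a z hz).differentiableAt.hasDerivAt
    have hw : HasDerivAt A (1 * d1 z + z * d2 z) z := (hasDerivAt_id z).mul hd1z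
    rw [hw.deriv]; ring
  have hA2 : deriv (fun z => d1 z + z * d2 z) =ᶠ[𝓝 0] fun z => 2 * d2 z + z * d3 z := by
    filter_upwards [hball] with z hz
    have hd2z : HasDerivAt d2 (d3 z) z := (hd2a z hz).differentiableAt.hasDerivAt
    have hw : HasDerivAt (fun z => d1 z + z * d2 z) (d2 z + (1 * d2 z + z * d3 z)) z :=
      ((hd1a z hz).differentiableAt.hasDerivAt).add ((hasDerivAt_id z).mul hd2z)
    rw [hw.deriv]; ring
  have hddA : deriv (deriv A) =ᶠ[𝓝 0] fun z => 2 * d2 z + z * d3 z := hA1.deriv.trans hA2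
  have hddA0 : deriv (deriv A) 0 = 2 * d2 0 := by
    rw [hddA.eq_of_nhds]; simp
  have hdddA0 : deriv (deriv (deriv A)) 0 = 3 * d3 0 := by
    rw [hddA.deriv.eq_of_nhds]
    have hd3z : HasDerivAt d3 (deriv d3 0) 0 := (hd3a 0 h0mem).differentiableAt.hasDerivAt
    have hw : HasDerivAt (fun z => 2 * d2 z + z * d3 z)
        (2 * d3 0 + (1 * d3 0 + 0 * deriv d3 0)) 0 :=
      (((hd2a 0 h0mem).differentiableAt.hasDerivAt).const_mul 2).add
        ((hasDerivAt_id 0).mul hd3z)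
    rw [hw.deriv]; ring
  -- B ladder
  have hdGa : AnalyticOnNhd ℂ (deriv G) (ball 0 1) := hGanal.deriv
  have hddGa : AnalyticOnNhd ℂ (deriv (deriv G)) (ball 0 1) := hdGa.deriv
  have hB1 : deriv B =ᶠ[𝓝 0] fun z => deriv G z * g z + G z * d1 z := by
    filter_upwards [hball] with z hz
    exact ((hGanal z hz).differentiableAt.hasDerivAt.mul
      (hganal z hz).differentiableAt.hasDerivAt).deriv
  have hB2 : deriv (fun z => deriv G z * g z + G z * d1 z) =ᶠ[𝓝 0]
      fun z => deriv (deriv G) z * g z + 2 * (deriv G z * d1 z) + G z * d2 z := by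
    filter_upwards [hball] with z hz
    have t1 : HasDerivAt (fun z => deriv G z * g z)
        (deriv (deriv G) z * g z + deriv G z * d1 z) z :=
      (hdGa z hz).differentiableAt.hasDerivAt.mul (hganal z hz).differentiableAt.hasDerivAt
    have t2 : HasDerivAt (fun z => G z * d1 z) (deriv G z * d1 z + G z * d2 z) z :=
      (hGanal z hz).differentiableAt.hasDerivAt.mul (hd1a z hz).differentiableAt.hasDerivAt
    rw [(t1.fun_add t2).deriv]; ring
  have hddB : deriv (deriv B) =ᶠ[𝓝 0]
      fun z => deriv (deriv G) z * g z + 2 * (deriv G z * d1 z) + G z * d2 z :=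
    hB1.deriv.trans hB2
  have hddB0 : deriv (deriv B) 0 = 2 * deriv G 0 + 2 * b 2 := by
    rw [hddB.eq_of_nhds, hg0, hg1, hG0, hg2]; ring
  have hdddB0 : deriv (deriv (deriv B)) 0
      = 3 * deriv (deriv G) 0 + 6 * deriv G 0 * b 2 + 6 * b 3 := by
    rw [hddB.deriv.eq_of_nhds]
    have t1 : HasDerivAt (fun z => deriv (deriv G) z * g z)
        (deriv (deriv (deriv G)) 0 * g 0 + deriv (deriv G) 0 * d1 0) 0 :=
      (hddGa 0 h0mem).differentiableAt.hasDerivAt.mul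
        (hganal 0 h0mem).differentiableAt.hasDerivAt
    have t2 : HasDerivAt (fun z => deriv G z * d1 z)
        (deriv (deriv G) 0 * d1 0 + deriv G 0 * d2 0) 0 :=
      (hdGa 0 h0mem).differentiableAt.hasDerivAt.mul
        (hd1a 0 h0mem).differentiableAt.hasDerivAt
    have t3 : HasDerivAt (fun z => G z * d2 z) (deriv G 0 * d2 0 + G 0 * d3 0) 0 :=
      (hGanal 0 h0mem).differentiableAt.hasDerivAt.mul
        (hd2a 0 h0mem).differentiableAt.hasDerivAt
    rw [((t1.fun_add (t2.const_mul 2)).fun_add t3).deriv, hg0, hg1, hG0, hg2, hg3]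
    ring
  -- coefficient relations
  have E2 : deriv (deriv A) 0 = deriv (deriv B) 0 := hABev.deriv.deriv.eq_of_nhds
  have E3 : deriv (deriv (deriv A)) 0 = deriv (deriv (deriv B)) 0 :=
    hABev.deriv.deriv.deriv.eq_of_nhds
  rw [hddA0, hddB0, hg2] at E2
  rw [hdddA0, hdddB0, hg3] at E3
  have hb2 : b 2 = deriv Φ 0 * c1 := by
    rw [← hdG0]; linear_combination E2 / 2
  have hb3 : b 3 = ((iteratedDeriv 2 Φ 0 + 2 * (deriv Φ 0) ^ 2) * c1 ^ 2
      + 2 * deriv Φ 0 * c2) / 4 := by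
    have h1 : b 3 = (deriv (deriv G) 0 + 2 * deriv G 0 * b 2) / 4 := by
      linear_combination E3 / 12
    rw [h1, hddG0, hdG0, hb2]
    ring
  -- pass to real estimates
  set p := (deriv Φ 0).re with hpdef
  set qr := (iteratedDeriv 2 Φ 0).re with hqrdef
  have hp' : deriv Φ 0 = (p : ℂ) := Complex.ext (by simp [hpdef]) (by simp [hd1im])
  have hq' : iteratedDeriv 2 Φ 0 = (qr : ℂ) := Complex.ext (by simp [hqrdef]) (by simp [hd2im])
  set x := ‖c1‖ with hxdef
  set y := ‖c2‖ with hydef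
  set K := |qr + 2 * p ^ 2| with hKdef
  have hKabs : ‖(iteratedDeriv 2 Φ 0 + 2 * (deriv Φ 0) ^ 2)‖ = K := by
    rw [hq', hp', hKdef]
    rw [show ((qr:ℂ) + 2 * (p:ℂ) ^ 2) = (((qr + 2 * p ^ 2 : ℝ)) : ℂ) by push_cast; ring]
    rw [Complex.norm_real, Real.norm_eq_abs]
  have hcondK : 2 * p ≤ K := by rw [← hKabs]; exact hcond
  have hb2abs : ‖(b 2)‖ = p * x := by
    rw [hb2, hp', norm_mul, Complex.norm_real, Real.norm_eq_abs, _root_.abs_of_pos hd1re]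
  have hb3abs : ‖(b 3)‖ ≤ (K * x ^ 2 + 2 * p * y) / 4 := by
    rw [hb3, norm_div]
    have h4 : ‖(4 : ℂ)‖ = 4 := by norm_num
    rw [h4]
    have htri : ‖((iteratedDeriv 2 Φ 0 + 2 * (deriv Φ 0) ^ 2) * c1 ^ 2
        + 2 * deriv Φ 0 * c2)‖ ≤ K * x ^ 2 + 2 * p * y := by
      refine le_trans (norm_add_le _ _) ?_
      rw [norm_mul, norm_pow, hKabs, norm_mul, norm_mul, hp', Complex.norm_real, Real.norm_eq_abs,
        _root_.abs_of_pos hd1re]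
      norm_num
      exact le_rfl
    linarith [htri, (by norm_num : (0:ℝ) < 4)]
  -- final arithmetic
  have hx0 : 0 ≤ x := norm_nonneg c1
  have hx1 : x ≤ 1 := hc1le
  have hy0 : 0 ≤ y := norm_nonneg c2
  have hyle : y ≤ 1 - x ^ 2 := hc2le
  clear_value x y K p qr
  have hp0 : 0 < p := hd1re
  have hK0 : 0 ≤ K := by linarith
  have hRHS : p ^ 2 / 4 * (qr / (2 * p) + p) ^ 2 + p ^ 2 = K ^ 2 / 16 + p ^ 2 := by
    have hK2 : K ^ 2 = (qr + 2 * p ^ 2) ^ 2 := by rw [hKdef]; exact _root_.sq_abs _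
    rw [hK2]
    field_simp
    ring
  rw [hRHS]
  have hmain : ‖(b 2 ^ 2 - b 3 ^ 2)‖
      ≤ (p * x) ^ 2 + ((K * x ^ 2 + 2 * p * y) / 4) ^ 2 := by
    refine le_trans (norm_sub_le _ _) ?_
    rw [norm_pow, norm_pow, hb2abs]
    have h1 : ‖(b 3)‖ ^ 2 ≤ ((K * x ^ 2 + 2 * p * y) / 4) ^ 2 := by
      refine pow_le_pow_left₀ (norm_nonneg _) hb3abs 2
    linarith
  refine le_trans hmain ?_
  have hKx : K * x ^ 2 + 2 * p * y ≤ K * x ^ 2 + 2 * p * (1 - x ^ 2) := by nlinarith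
  have hsq : ((K * x ^ 2 + 2 * p * y) / 4) ^ 2 ≤ ((K * x ^ 2 + 2 * p * (1 - x ^ 2)) / 4) ^ 2 := by
    refine pow_le_pow_left₀ (by nlinarith [mul_nonneg hK0 (sq_nonneg x), mul_nonneg hp0.le hy0]) (by linarith) 2
  have hfin : p ^ 2 * x ^ 2 + ((K * x ^ 2 + 2 * p * (1 - x ^ 2)) / 4) ^ 2
      ≤ K ^ 2 / 16 + p ^ 2 := by
    have ht0 : (0:ℝ) ≤ x ^ 2 := sq_nonneg x
    have ht1 : x ^ 2 ≤ 1 := by nlinarith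
    nlinarith [mul_nonneg (mul_nonneg (sub_nonneg.2 ht1) (sub_nonneg.2 hcondK)) (sub_nonneg.2 ht1),
      mul_nonneg (sub_nonneg.2 ht1) (sub_nonneg.2 hcondK),
      mul_nonneg (mul_nonneg (sub_nonneg.2 ht1) (sub_nonneg.2 hcondK)) hp0.le,
      mul_nonneg (mul_nonneg (mul_nonneg (sub_nonneg.2 ht1) (sub_nonneg.2 hcondK)) (sub_nonneg.2 hcondK)) ht0,
      mul_nonneg (mul_nonneg (mul_nonneg (sub_nonneg.2 ht1) (sub_nonneg.2 hcondK)) hp0.le) ht0]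
  nlinarith [hfin, hsq]
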